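/- arXiv:1411.5430 — 8 statements merged into one kernel-verified Lean document; each statement's English description precedes it below -/
import Mathlib

section
/- (Lemma 1) Let Ω be a set, P a Perm algebra, Z a Zinbiel algebra, and A an Ω-algebra, all over a field k of characteristic zero. Equip P ⊗ A with the operations (p⊗a) ⊢_ω (q⊗b) = pq ⊗ (a ∘_ω b) and (p⊗a) ⊣_ω (q⊗b) = qp ⊗ (a ∘_ω b); equip Z ⊠ (P⊗A) := Z ⊗ (P ⊗ A) with the operations (z⊗d) ∘_ω (w⊗e) = zw ⊗ (d ⊢_ω e) + wz ⊗ (d ⊣_ω e); equip P ⊠ Z := P ⊗ Z with the product (p⊗z)(q⊗w) = pq ⊗ zw + qp ⊗ wz; and equip (P ⊠ Z) ⊗ A with the operations (x⊗a) ∘_ω (y⊗b) = xy ⊗ (a ∘_ω b). Then the k-linear equivalence Z ⊗ (P ⊗ A) → (P ⊗ Z) ⊗ A determined by z ⊗ (p ⊗ a) ↦ (p ⊗ z) ⊗ a is an isomorphism of Ω-algebras, i.e. it is bijective and preserves each operation ∘_ω. -/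
open scoped TensorProduct

/-- Lemma 1: For a Perm algebra `P`, a Zinbiel algebra `Z` and an `Ω`-algebra
`A` over a field `k` of characteristic zero, the `k`-linear equivalence
`Z ⊗ (P ⊗ A) → (P ⊗ Z) ⊗ A`, `z ⊗ (p ⊗ a) ↦ (p ⊗ z) ⊗ a`, is an isomorphism of
`Ω`-algebras `Z ⊠ (P ⊗ A) ≅ (P ⊠ Z) ⊗ A`. -/
theorem stmt3 {k : Type*} [Field k] [CharZero k] {Ω : Type*}
    {P : Type*} [NonUnitalRing P] [Module k P] [SMulCommClass k P P] [IsScalarTower k P P]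
    (hP : ∀ x y z : P, (x * y - y * x) * z = 0)
    {Z : Type*} [NonUnitalNonAssocRing Z] [Module k Z] [SMulCommClass k Z Z] [IsScalarTower k Z Z]
    (hZ : ∀ x y z : Z, (x * y + y * x) * z = x * (y * z))
    {A : Type*} [AddCommGroup A] [Module k A]
    (mul : Ω → A →ₗ[k] A →ₗ[k] A)
    -- the dialgebra operations on `P ⊗ A`
    (vd dv : Ω → P ⊗[k] A →ₗ[k] P ⊗[k] A →ₗ[k] P ⊗[k] A)
    (hvd : ∀ (ω : Ω) (p q : P) (a b : A),
      vd ω (p ⊗ₜ[k] a) (q ⊗ₜ[k] b) = (p * q) ⊗ₜ[k] (mul ω a b))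
    (hdv : ∀ (ω : Ω) (p q : P) (a b : A),
      dv ω (p ⊗ₜ[k] a) (q ⊗ₜ[k] b) = (q * p) ⊗ₜ[k] (mul ω a b))
    -- the operations on `Z ⊠ (P ⊗ A)`
    (op1 : Ω → Z ⊗[k] (P ⊗[k] A) →ₗ[k] Z ⊗[k] (P ⊗[k] A) →ₗ[k] Z ⊗[k] (P ⊗[k] A))
    (hop1 : ∀ (ω : Ω) (z w : Z) (d e : P ⊗[k] A),
      op1 ω (z ⊗ₜ[k] d) (w ⊗ₜ[k] e) = (z * w) ⊗ₜ[k] (vd ω d e) + (w * z) ⊗ₜ[k] (dv ω d e))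
    -- the product on `P ⊠ Z`
    (mPZ : P ⊗[k] Z →ₗ[k] P ⊗[k] Z →ₗ[k] P ⊗[k] Z)
    (hmPZ : ∀ (p q : P) (z w : Z),
      mPZ (p ⊗ₜ[k] z) (q ⊗ₜ[k] w) = (p * q) ⊗ₜ[k] (z * w) + (q * p) ⊗ₜ[k] (w * z))
    -- the operations on `(P ⊠ Z) ⊗ A`
    (op2 : Ω → (P ⊗[k] Z) ⊗[k] A →ₗ[k] (P ⊗[k] Z) ⊗[k] A →ₗ[k] (P ⊗[k] Z) ⊗[k] A)
    (hop2 : ∀ (ω : Ω) (x y : P ⊗[k] Z) (a b : A),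
      op2 ω (x ⊗ₜ[k] a) (y ⊗ₜ[k] b) = (mPZ x y) ⊗ₜ[k] (mul ω a b))
    -- the linear equivalence determined by `z ⊗ (p ⊗ a) ↦ (p ⊗ z) ⊗ a`
    (e : Z ⊗[k] (P ⊗[k] A) ≃ₗ[k] (P ⊗[k] Z) ⊗[k] A)
    (he : ∀ (z : Z) (p : P) (a : A), e (z ⊗ₜ[k] (p ⊗ₜ[k] a)) = (p ⊗ₜ[k] z) ⊗ₜ[k] a) :
    Function.Bijective e ∧
      ∀ (ω : Ω) (x y : Z ⊗[k] (P ⊗[k] A)), e (op1 ω x y) = op2 ω (e x) (e y) := by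
  refine ⟨e.bijective, fun ω x y => ?_⟩
  induction x using TensorProduct.induction_on with
  | zero => simp
  | add x₁ x₂ h₁ h₂ => simp [map_add, h₁, h₂]
  | tmul z d =>
    induction y using TensorProduct.induction_on with
    | zero => simp
    | add y₁ y₂ h₁ h₂ => simp [map_add, h₁, h₂]
    | tmul w f =>
      induction d using TensorProduct.induction_on with
      | zero => simp [TensorProduct.tmul_zero]
      | add d₁ d₂ h₁ h₂ =>
        simp only [TensorProduct.tmul_add, map_add, LinearMap.add_apply, h₁, h₂]
      | tmul p a =>
        induction f using TensorProduct.induction_on with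
        | zero => simp [TensorProduct.tmul_zero]
        | add f₁ f₂ h₁ h₂ =>
          simp only [TensorProduct.tmul_add, map_add, LinearMap.add_apply, h₁, h₂]
        | tmul q b =>
          rw [hop1, hvd, hdv, map_add, he, he, he, he, hop2, hmPZ,
            TensorProduct.add_tmul]
end

section
/- Let P be a Perm algebra and Z a Zinbiel algebra over a field k of characteristic zero. Then the tensor product P ⊗ Z equipped with the bilinear product (p⊗z)(q⊗w) = pq ⊗ zw + qp ⊗ wz is a commutative and associative (possibly nonunital) k-algebra. -/
open scoped TensorProduct

/-- If `P` is a Perm algebra and `Z` a Zinbiel algebra over a field `k` of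
characteristic zero, then `P ⊗ Z` with the product
`(p⊗z)(q⊗w) = pq ⊗ zw + qp ⊗ wz` is commutative and associative. -/
theorem stmt4 {k : Type*} [Field k] [CharZero k]
    {P : Type*} [NonUnitalRing P] [Module k P] [SMulCommClass k P P] [IsScalarTower k P P]
    (hP : ∀ x y z : P, (x * y - y * x) * z = 0)
    {Z : Type*} [NonUnitalNonAssocRing Z] [Module k Z] [SMulCommClass k Z Z] [IsScalarTower k Z Z]
    (hZ : ∀ x y z : Z, (x * y + y * x) * z = x * (y * z))
    (m : P ⊗[k] Z →ₗ[k] P ⊗[k] Z →ₗ[k] P ⊗[k] Z)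
    (hm : ∀ (p q : P) (z w : Z),
      m (p ⊗ₜ[k] z) (q ⊗ₜ[k] w) = (p * q) ⊗ₜ[k] (z * w) + (q * p) ⊗ₜ[k] (w * z)) :
    (∀ x y : P ⊗[k] Z, m x y = m y x) ∧
    (∀ x y z : P ⊗[k] Z, m (m x y) z = m x (m y z)) := by
  have hP' : ∀ a b c : P, a * b * c = b * a * c := by
    intro a b c
    have := hP a b c
    rwa [sub_mul, sub_eq_zero] at this
  have hZ' : ∀ x y z : Z, x * (y * z) = x * y * z + y * x * z := by
    intro x y z
    rw [← hZ, add_mul]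
  constructor
  · intro x y
    induction x using TensorProduct.induction_on with
    | zero => simp
    | tmul p z =>
      induction y using TensorProduct.induction_on with
      | zero => simp
      | tmul q w => rw [hm, hm]; exact add_comm _ _
      | add a b ha hb => simp only [map_add, LinearMap.add_apply, ha, hb]
    | add a b ha hb => simp only [map_add, LinearMap.add_apply, ha, hb]
  · have key : ∀ (p q r : P) (z w v : Z),
        m (m (p ⊗ₜ[k] z) (q ⊗ₜ[k] w)) (r ⊗ₜ[k] v)
          = m (p ⊗ₜ[k] z) (m (q ⊗ₜ[k] w) (r ⊗ₜ[k] v)) := by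
      intro p q r z w v
      rw [hm, hm, map_add, LinearMap.add_apply, hm, hm, map_add, hm, hm]
      simp only [hZ', TensorProduct.tmul_add]
      have e1 : q * p * r = p * q * r := hP' q p r
      have e2 : r * (p * q) = p * (r * q) := by
        rw [← mul_assoc, hP' r p, mul_assoc]
      have e3 : r * (q * p) = q * (r * p) := by
        rw [← mul_assoc, hP' r q, mul_assoc]
      have e4 : q * r * p = r * q * p := hP' q r p
      have e5 : p * q * r = p * (q * r) := mul_assoc p q r
      have e6 : p * (r * q) = p * r * q := (mul_assoc p r q).symm
      have e7 : q * (r * p) = q * r * p := (mul_assoc q r p).symm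
      rw [e1, e2, e3, e5, e6, e7]; simp only [e4]
      abel
    intro x y z
    induction x using TensorProduct.induction_on with
    | zero => simp
    | add a b ha hb => simp only [map_add, LinearMap.add_apply, ha, hb]
    | tmul p pz =>
      induction y using TensorProduct.induction_on with
      | zero => simp
      | add a b ha hb => simp only [map_add, LinearMap.add_apply, ha, hb]
      | tmul q w =>
        induction z using TensorProduct.induction_on with
        | zero => simp
        | add a b ha hb => simp only [map_add, LinearMap.add_apply, ha, hb]
        | tmul r v => exact key p q r pz w v
end

section
/- Let Z be a Zinbiel algebra over a field k of characteristic zero, let n ≥ 1, and let z₁, …, zₙ, z_{n+1} ∈ Z. Then for every permutation σ of {1,…,n}, the right-normed product r(z_{σ(1)}, …, z_{σ(n)}, z_{n+1}) equals r(z₁, …, zₙ, z_{n+1}); that is, the right-normed product is invariant under any permutation of all its factors except the last one. -/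
/-- The right-normed product `r(z₁,…,zₙ,w) = z₁(z₂(⋯(zₙ w)⋯))` of the factors
`z 0, …, z (n-1)` followed by a last factor `w`. -/
def rprod {Z : Type*} [Mul Z] : {n : ℕ} → (Fin n → Z) → Z → Z
  | 0, _, w => w
  | _ + 1, z, w => z 0 * rprod (fun i => z i.succ) w

lemma rprod_eq_foldr {Z : Type*} [Mul Z] : ∀ {n : ℕ} (z : Fin n → Z) (w : Z),
    rprod z w = (List.ofFn z).foldr (· * ·) w
  | 0, _, _ => rfl
  | n + 1, z, w => by
    rw [List.ofFn_succ, List.foldr_cons, rprod, rprod_eq_foldr]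

/-- In a Zinbiel algebra over a field `k` of characteristic zero, the
right-normed product `r(z₁,…,zₙ,z_{n+1})`, `n ≥ 1`, is invariant under any permutation of
all its factors except the last one. -/
theorem stmt6 {k : Type*} [Field k] [CharZero k]
    {Z : Type*} [NonUnitalNonAssocRing Z] [Module k Z] [SMulCommClass k Z Z] [IsScalarTower k Z Z]
    (hZ : ∀ x y z : Z, (x * y + y * x) * z = x * (y * z))
    {n : ℕ} (hn : 1 ≤ n) (z : Fin n → Z) (w : Z) (σ : Equiv.Perm (Fin n)) :
    rprod (z ∘ σ) w = rprod z w := by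
  have lcomm : ∀ x y t : Z, x * (y * t) = y * (x * t) := fun x y t => by
    rw [← hZ, ← hZ, add_comm]
  rw [rprod_eq_foldr, rprod_eq_foldr]
  exact @List.Perm.foldr_eq _ _ (· * ·) _ _ ⟨lcomm⟩ (σ.ofFn_comp_perm z) w
end

section
/- (Lemma 3) Let Z be a Zinbiel algebra over a field k of characteristic zero, let n ≥ 1, and let z₁, …, zₙ, z_{n+1} ∈ Z. Then ∑_{i=1}^{n} r(z₁, …, ẑᵢ, …, zₙ, zᵢ) · z_{n+1} = r(z₁, …, zₙ, z_{n+1}), where r(z₁, …, ẑᵢ, …, zₙ, zᵢ) denotes the right-normed product of the sequence z₁, …, zₙ with the factor zᵢ deleted from its position and appended at the end. -/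
/-- Lemma 3: In a Zinbiel algebra over a field `k` of characteristic zero,
`∑_{i=1}^{n} r(z₁,…,ẑᵢ,…,zₙ,zᵢ) · z_{n+1} = r(z₁,…,zₙ,z_{n+1})` for every `n ≥ 1`
(here `n = m + 1`). -/
theorem stmt7 {k : Type*} [Field k] [CharZero k]
    {Z : Type*} [NonUnitalNonAssocRing Z] [Module k Z] [SMulCommClass k Z Z] [IsScalarTower k Z Z]
    (hZ : ∀ x y z : Z, (x * y + y * x) * z = x * (y * z))
    {m : ℕ} (z : Fin (m + 1) → Z) (w : Z) :
    ∑ i : Fin (m + 1), (rprod (fun j : Fin m => z (i.succAbove j)) (z i)) * w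
      = rprod z w := by
  induction m generalizing w with
  | zero => simp [rprod]
  | succ m ih =>
    have key : ∀ x y u : Z, (x * y) * u = x * (y * u) - (y * x) * u := by
      intro x y u
      have h := hZ x y u
      rw [add_mul] at h
      exact eq_sub_of_add_eq h
    rw [Fin.sum_univ_succ]
    have h0 : (fun j : Fin (m + 1) => z ((0 : Fin (m + 2)).succAbove j))
        = fun j => z j.succ := by
      funext j; rw [Fin.succAbove_zero]
    have h1 : ∑ i : Fin (m + 1),
        rprod (fun j : Fin (m + 1) => z ((i.succ).succAbove j)) (z i.succ) * w
        = ∑ i : Fin (m + 1),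
          (z 0 * rprod (fun j : Fin m => z ((i.succAbove j).succ)) (z i.succ)) * w := by
      apply Finset.sum_congr rfl
      intro i _
      congr 1
      simp only [rprod, Fin.succ_succAbove_zero, Fin.succ_succAbove_succ]
    rw [h0, h1]
    have h2 : ∑ i : Fin (m + 1),
        (z 0 * rprod (fun j : Fin m => z ((i.succAbove j).succ)) (z i.succ)) * w
        = ∑ i : Fin (m + 1),
          (z 0 * (rprod (fun j : Fin m => z ((i.succAbove j).succ)) (z i.succ) * w)
            - (rprod (fun j : Fin m => z ((i.succAbove j).succ)) (z i.succ) * z 0) * w) := by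
      apply Finset.sum_congr rfl
      intro i _
      exact key _ _ _
    rw [h2, Finset.sum_sub_distrib, ← Finset.sum_mul, ← Finset.mul_sum]
    have hw := ih (fun j => z j.succ) w
    have h0' := ih (fun j => z j.succ) (z 0)
    rw [hw, h0']
    show _ = z 0 * rprod (fun j => z j.succ) w
    abel
end

section
/- Let Ω be a set, let A be an Ω-algebra over a field k of characteristic zero, and let M be a k-vector space equipped with bilinear maps l_ω : A × M → M and r_ω : M × A → M for each ω ∈ Ω. Let A ⋉ M denote the vector space A ⊕ M with operations (a,u) ∘_ω (b,v) = (a ∘_ω b, l_ω(a,v) + r_ω(u,b)), and let A ⋊ M denote A ⊕ M with the two families of operations (a,u) ⊢_ω (b,v) = (a ∘_ω b, l_ω(a,v)) and (a,u) ⊣_ω (b,v) = (a ∘_ω b, r_ω(u,b)). Equip P₂ ⊗ (A ⋉ M) with the operations (p⊗c) ⊢_ω (q⊗d) = pq ⊗ (c ∘_ω d) and (p⊗c) ⊣_ω (q⊗d) = qp ⊗ (c ∘_ω d). Then the k-linear map φ : A ⋊ M → P₂ ⊗ (A ⋉ M) defined by φ(a,u) = e₁ ⊗ (a,0) + e₂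 ⊗ (0,u) is injective and satisfies φ(x ⊢_ω y) = φ(x) ⊢_ω φ(y) and φ(x ⊣_ω y) = φ(x) ⊣_ω φ(y) for all x, y ∈ A ⋊ M and all ω ∈ Ω. -/
open scoped TensorProduct

/-- For an `Ω`-algebra `A` and an Eilenberg bimodule-like datum
`(M, l_ω, r_ω)`, the linear map `φ : A ⋊ M → P₂ ⊗ (A ⋉ M)`,
`φ(a,u) = e₁ ⊗ (a,0) + e₂ ⊗ (0,u)`, is injective and preserves the operations
`⊢_ω` and `⊣_ω`.  Here `P₂ = k × k` with product `(a,b)(c,d) = (ac, ad)`. -/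
theorem stmt9 {k : Type*} [Field k] [CharZero k] {Ω : Type*}
    {A : Type*} [AddCommGroup A] [Module k A]
    (mul : Ω → A →ₗ[k] A →ₗ[k] A)
    {M : Type*} [AddCommGroup M] [Module k M]
    (l : Ω → A →ₗ[k] M →ₗ[k] M) (r : Ω → M →ₗ[k] A →ₗ[k] M)
    -- the operations `⊢_ω` and `⊣_ω` on `P₂ ⊗ (A ⋉ M)`
    (L R : Ω → (k × k) ⊗[k] (A × M) →ₗ[k] (k × k) ⊗[k] (A × M) →ₗ[k] (k × k) ⊗[k] (A × M))
    (hL : ∀ (ω : Ω) (p q : k × k) (c d : A × M),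
      L ω (p ⊗ₜ[k] c) (q ⊗ₜ[k] d)
        = ((p.1 * q.1, p.1 * q.2) : k × k) ⊗ₜ[k]
            ((mul ω c.1 d.1, l ω c.1 d.2 + r ω c.2 d.1) : A × M))
    (hR : ∀ (ω : Ω) (p q : k × k) (c d : A × M),
      R ω (p ⊗ₜ[k] c) (q ⊗ₜ[k] d)
        = ((q.1 * p.1, q.1 * p.2) : k × k) ⊗ₜ[k]
            ((mul ω c.1 d.1, l ω c.1 d.2 + r ω c.2 d.1) : A × M))
    -- the linear map `φ`
    (φ : (A × M) →ₗ[k] (k × k) ⊗[k] (A × M))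
    (hφ : ∀ (a : A) (u : M),
      φ (a, u) = ((1, 0) : k × k) ⊗ₜ[k] ((a, 0) : A × M)
        + ((0, 1) : k × k) ⊗ₜ[k] ((0, u) : A × M)) :
    Function.Injective φ ∧
      ∀ (ω : Ω) (a b : A) (u v : M),
        φ (mul ω a b, l ω a v) = L ω (φ (a, u)) (φ (b, v)) ∧
        φ (mul ω a b, r ω u b) = R ω (φ (a, u)) (φ (b, v)) := by
  constructor
  · let ψ : (k × k) ⊗[k] (A × M) →ₗ[k] (A × M) :=
      TensorProduct.lift (LinearMap.mk₂ k (fun p c => (p.1 • c.1, p.2 • c.2))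
        (by intro p q c; simp [add_smul, Prod.ext_iff])
        (by intro s p c; simp [mul_smul, Prod.ext_iff, smul_eq_mul])
        (by intro p c d; simp [smul_add, Prod.ext_iff])
        (by intro s p c; exact Prod.ext (smul_comm _ _ _) (smul_comm _ _ _)))
    have hli : Function.LeftInverse ψ φ := by
      intro x
      rw [show x = (x.1, x.2) from rfl, hφ, map_add]
      simp only [ψ, TensorProduct.lift.tmul, LinearMap.mk₂_apply]
      simp
    exact hli.injective
  · intro ω a b u v
    refine ⟨?_, ?_⟩ <;>
    · rw [hφ, hφ, hφ]
      simp only [map_add, LinearMap.add_apply, hL, hR]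
      simp [Prod.mk_zero_zero]
end

section
/- Let D be a left Leibniz algebra over a field k of characteristic zero. Then there exist a Lie algebra L over k and an injective k-linear map φ : D → P₂ ⊗ L such that φ([a,b]) = φ(a) ⊢ φ(b) for all a, b ∈ D, where P₂ ⊗ L carries the bilinear operation (p⊗x) ⊢ (q⊗y) = pq ⊗ [x,y]. -/
open scoped TensorProduct

/-- A bundled Lie algebra over `k`. -/
structure BundledLieAlgebra (k : Type) [Field k] where
  carrier : Type
  [isLieRing : LieRing carrier]
  [isLieAlgebra : LieAlgebra k carrier]

attribute [instance] BundledLieAlgebra.isLieRing BundledLieAlgebra.isLieAlgebra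

/-- Every left Leibniz algebra `D` over a field `k` of characteristic zero
embeds into `P₂ ⊗ L` for some Lie algebra `L`, where `P₂ ⊗ L` carries the operation
`(p⊗x) ⊢ (q⊗y) = pq ⊗ [x,y]` and `P₂ = k × k` with product `(a,b)(c,d) = (ac, ad)`. -/
theorem stmt11 {k : Type} [Field k] [CharZero k]
    {D : Type} [AddCommGroup D] [Module k D]
    (br : D →ₗ[k] D →ₗ[k] D)
    (hbr : ∀ x y z : D, br x (br y z) = br (br x y) z + br y (br x z)) :
    ∃ (Lb : BundledLieAlgebra k)
      (m : (k × k) ⊗[k] Lb.carrier →ₗ[k] (k × k) ⊗[k] Lb.carrier →ₗ[k]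
        (k × k) ⊗[k] Lb.carrier)
      (φ : D →ₗ[k] (k × k) ⊗[k] Lb.carrier),
      (∀ (p q : k × k) (x y : Lb.carrier),
        m (p ⊗ₜ[k] x) (q ⊗ₜ[k] y) = ((p.1 * q.1, p.1 * q.2) : k × k) ⊗ₜ[k] ⁅x, y⁆) ∧
      Function.Injective φ ∧
      ∀ a b : D, φ (br a b) = m (φ a) (φ b) := by
  classical
  set L := Module.End k (D × k) with hL
  letI : LieRing L := LieRing.ofAssociativeRing
  letI : LieAlgebra k L := LieAlgebra.ofAssociativeAlgebra
  -- F a : (d, c) ↦ (br a d, 0)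
  let F : D →ₗ[k] L :=
    { toFun := fun a => LinearMap.inl k D k ∘ₗ br a ∘ₗ LinearMap.fst k D k
      map_add' := fun a b => LinearMap.ext fun x => by
        show ((br (a + b)) x.1, (0 : k)) = (((br a) x.1, (0 : k)) + ((br b) x.1, (0 : k)) : D × k)
        simp [Prod.ext_iff]
      map_smul' := fun c a => LinearMap.ext fun x => by
        show ((br (c • a)) x.1, (0 : k)) = (c • (((br a) x.1, (0 : k)) : D × k))
        simp [Prod.ext_iff] }
  -- G a : (d, c) ↦ (c • a, 0)
  let G : D →ₗ[k] L :=
    { toFun := fun a => LinearMap.inl k D k ∘ₗ LinearMap.toSpanSingleton k D a ∘ₗ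
        LinearMap.snd k D k
      map_add' := fun a b => LinearMap.ext fun x => by
        show ((x.2 • (a + b) : D), (0 : k)) = (((x.2 • a : D), (0 : k)) + ((x.2 • b : D), (0 : k)) : D × k)
        simp [Prod.ext_iff, smul_add]
      map_smul' := fun c a => LinearMap.ext fun x => by
        show ((x.2 • (c • a) : D), (0 : k)) = (c • (((x.2 • a : D), (0 : k)) : D × k))
        rw [smul_comm]
        simp [Prod.ext_iff] }
  have hF_apply : ∀ (a : D) (x : D × k), F a x = (br a x.1, 0) := fun a x => rfl
  have hG_apply : ∀ (a : D) (x : D × k), G a x = (x.2 • a, 0) := fun a x => rfl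
  have hFF : ∀ a b : D, ⁅F a, F b⁆ = F (br a b) := by
    intro a b
    rw [LieRing.of_associative_ring_bracket]
    apply LinearMap.ext; intro x
    show F a (F b x) - F b (F a x) = F (br a b) x
    rw [hF_apply, hF_apply, hF_apply, hF_apply, hF_apply]
    have := hbr a b x.1
    simp only [Prod.mk_sub_mk, Prod.ext_iff]
    constructor
    · rw [this]; abel
    · simp
  have hFG : ∀ a b : D, ⁅F a, G b⁆ = G (br a b) := by
    intro a b
    rw [LieRing.of_associative_ring_bracket]
    apply LinearMap.ext; intro x
    show F a (G b x) - G b (F a x) = G (br a b) x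
    rw [hG_apply, hF_apply, hF_apply, hG_apply, hG_apply]
    simp [Prod.ext_iff]
  -- the bilinear multiplication on k × k
  let μ : (k × k) →ₗ[k] (k × k) →ₗ[k] (k × k) :=
    LinearMap.mk₂ k (fun p q => (p.1 * q.1, p.1 * q.2))
      (by intro p p' q; simp [Prod.ext_iff, add_mul])
      (by intro c p q; simp [Prod.ext_iff, mul_assoc])
      (by intro p q q'; simp [Prod.ext_iff, mul_add])
      (by intro c p q; simp [Prod.ext_iff, mul_left_comm])
  -- the bracket as a bilinear map on L
  let β : L →ₗ[k] L →ₗ[k] L :=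
    LinearMap.mk₂ k (fun x y => ⁅x, y⁆)
      (fun x x' y => add_lie x x' y)
      (fun c x y => smul_lie c x y)
      (fun x y y' => lie_add x y y')
      (fun c x y => lie_smul c x y)
  let m : (k × k) ⊗[k] L →ₗ[k] (k × k) ⊗[k] L →ₗ[k] (k × k) ⊗[k] L :=
    TensorProduct.map₂ μ β
  have hm : ∀ (p q : k × k) (x y : L),
      m (p ⊗ₜ[k] x) (q ⊗ₜ[k] y) = ((p.1 * q.1, p.1 * q.2) : k × k) ⊗ₜ[k] ⁅x, y⁆ := by
    intro p q x y
    simp [m, TensorProduct.map₂_apply_tmul, μ, β]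
  let φ : D →ₗ[k] (k × k) ⊗[k] L :=
    (TensorProduct.mk k (k × k) L ((1 : k), (0 : k))) ∘ₗ F +
      (TensorProduct.mk k (k × k) L ((0 : k), (1 : k))) ∘ₗ G
  have hφ : ∀ a : D, φ a = ((1 : k), (0 : k)) ⊗ₜ[k] F a + ((0 : k), (1 : k)) ⊗ₜ[k] G a := by
    intro a; rfl
  refine ⟨⟨L⟩, m, φ, hm, ?_, ?_⟩
  · -- injectivity
    intro a b hab
    let ψ : (k × k) ⊗[k] L →ₗ[k] L :=
      (TensorProduct.lid k L).toLinearMap ∘ₗ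
        TensorProduct.map (LinearMap.snd k k k) LinearMap.id
    have hψ : ∀ a : D, ψ (φ a) = G a := by
      intro a
      simp [ψ, hφ, TensorProduct.map_tmul]
    have hG : G a = G b := by rw [← hψ a, ← hψ b, hab]
    have h2 := congrArg (fun f : L => f ((0 : D), (1 : k))) hG
    rw [hG_apply, hG_apply] at h2
    simpa using congrArg Prod.fst h2
  · intro a b
    simp only [hφ, map_add, LinearMap.add_apply, hm, hFF, hFG]
    norm_num
    simp only [Prod.mk_zero_zero, TensorProduct.zero_tmul, add_zero]
end

section
/- Let P be a Perm algebra, Z a Zinbiel algebra, and A a commutative associative (possibly nonunital) algebra, all over a field k of characteristic zero. Equip the tensor product Z ⊗ P ⊗ A with the bilinear product (z ⊗ p ⊗ a)(w ⊗ q ⊗ b) = zw ⊗ pq ⊗ ab + wz ⊗ qp ⊗ ab. Then this product is commutative and associative. -/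
open scoped TensorProduct

/-- For a Perm algebra `P`, a Zinbiel algebra `Z` and a commutative
associative algebra `A` over a field `k` of characteristic zero, the product
`(z⊗p⊗a)(w⊗q⊗b) = zw ⊗ pq ⊗ ab + wz ⊗ qp ⊗ ab` on `Z ⊗ P ⊗ A` is commutative and
associative. -/
theorem stmt12 {k : Type*} [Field k] [CharZero k]
    {P : Type*} [NonUnitalRing P] [Module k P] [SMulCommClass k P P] [IsScalarTower k P P]
    (hP : ∀ x y z : P, (x * y - y * x) * z = 0)
    {Z : Type*} [NonUnitalNonAssocRing Z] [Module k Z] [SMulCommClass k Z Z] [IsScalarTower k Z Z]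
    (hZ : ∀ x y z : Z, (x * y + y * x) * z = x * (y * z))
    {A : Type*} [NonUnitalCommRing A] [Module k A] [SMulCommClass k A A] [IsScalarTower k A A]
    (m : Z ⊗[k] (P ⊗[k] A) →ₗ[k] Z ⊗[k] (P ⊗[k] A) →ₗ[k] Z ⊗[k] (P ⊗[k] A))
    (hm : ∀ (z w : Z) (p q : P) (a b : A),
      m (z ⊗ₜ[k] (p ⊗ₜ[k] a)) (w ⊗ₜ[k] (q ⊗ₜ[k] b))
        = (z * w) ⊗ₜ[k] ((p * q) ⊗ₜ[k] (a * b)) + (w * z) ⊗ₜ[k] ((q * p) ⊗ₜ[k] (a * b))) :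
    (∀ x y : Z ⊗[k] (P ⊗[k] A), m x y = m y x) ∧
    (∀ x y z : Z ⊗[k] (P ⊗[k] A), m (m x y) z = m x (m y z)) := by
  have hP' : ∀ x y z : P, (x * y) * z = (y * x) * z := fun x y z => by
    have h := hP x y z
    rw [sub_mul, sub_eq_zero] at h
    exact h
  have hflip : m = m.flip := by
    ext z p a w q b
    simp only [TensorProduct.AlgebraTensorModule.curry_apply, LinearMap.coe_restrictScalars,
      TensorProduct.curry_apply, LinearMap.flip_apply, LinearMap.compr₂_apply,
      TensorProduct.mk_apply]
    rw [hm, hm, mul_comm b a, add_comm]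
  constructor
  · intro x y
    conv_lhs => rw [hflip]
    rw [LinearMap.flip_apply]
  · -- pure tensor case
    have key : ∀ (z₁ z₂ z₃ : Z) (p q r : P) (a b c : A),
        m (m (z₁ ⊗ₜ[k] (p ⊗ₜ[k] a)) (z₂ ⊗ₜ[k] (q ⊗ₜ[k] b))) (z₃ ⊗ₜ[k] (r ⊗ₜ[k] c))
          = m (z₁ ⊗ₜ[k] (p ⊗ₜ[k] a)) (m (z₂ ⊗ₜ[k] (q ⊗ₜ[k] b)) (z₃ ⊗ₜ[k] (r ⊗ₜ[k] c))) := by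
      intro z₁ z₂ z₃ p q r a b c
      rw [hm, hm, map_add, LinearMap.add_apply, map_add, hm, hm, hm, hm]
      have eP1 : (q * p) * r = (p * q) * r := hP' q p r
      have eP2 : p * (q * r) = (p * q) * r := (mul_assoc p q r).symm
      have eP3 : p * (r * q) = r * (p * q) := by
        rw [← mul_assoc, hP' p r, mul_assoc]
      have eP4 : (q * r) * p = (r * q) * p := hP' q r p
      have eP5 : r * (q * p) = (r * q) * p := (mul_assoc r q p).symm
      have eA : (a * b) * c = a * (b * c) := mul_assoc a b c
      have eZ1 : z₁ * (z₂ * z₃) = (z₁ * z₂) * z₃ + (z₂ * z₁) * z₃ := by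
        rw [← hZ, add_mul]
      have eZ2 : z₃ * (z₁ * z₂) = z₁ * (z₃ * z₂) := by
        rw [← hZ z₃ z₁ z₂, ← hZ z₁ z₃ z₂, add_comm]
      have eZ3 : z₃ * (z₂ * z₁) = (z₃ * z₂) * z₁ + (z₂ * z₃) * z₁ := by
        rw [← hZ, add_mul]
      rw [eP1, eP2, eP3, eP4, eP5, eA, eZ1, eZ2, eZ3]
      simp only [TensorProduct.add_tmul]
      abel
    intro x y z
    induction x using TensorProduct.induction_on with
    | zero => simp
    | add x₁ x₂ ih₁ ih₂ => simp only [map_add, LinearMap.add_apply, ih₁, ih₂]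
    | tmul z₁ t₁ =>
      induction t₁ using TensorProduct.induction_on with
      | zero => simp
      | add s₁ s₂ ih₁ ih₂ =>
        simp only [TensorProduct.tmul_add, map_add, LinearMap.add_apply, ih₁, ih₂]
      | tmul p a =>
        induction y using TensorProduct.induction_on with
        | zero => simp
        | add y₁ y₂ ih₁ ih₂ => simp only [map_add, LinearMap.add_apply, ih₁, ih₂]
        | tmul z₂ t₂ =>
          induction t₂ using TensorProduct.induction_on with
          | zero => simp
          | add s₁ s₂ ih₁ ih₂ =>
            simp only [TensorProduct.tmul_add, map_add, LinearMap.add_apply, ih₁, ih₂]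
          | tmul q b =>
            induction z using TensorProduct.induction_on with
            | zero => simp
            | add w₁ w₂ ih₁ ih₂ => simp only [map_add, ih₁, ih₂]
            | tmul z₃ t₃ =>
              induction t₃ using TensorProduct.induction_on with
              | zero => simp
              | add s₁ s₂ ih₁ ih₂ =>
                simp only [TensorProduct.tmul_add, map_add, ih₁, ih₂]
              | tmul r c => exact key z₁ z₂ z₃ p q r a b c
end

section
/- Let Z be a Zinbiel algebra and D a left Leibniz algebra over a field k of characteristic zero. Then the tensor product Z ⊗ D equipped with the bilinear bracket [z ⊗ a, w ⊗ b] = zw ⊗ [a,b] − wz ⊗ [b,a] is a Lie algebra over k, i.e. the bracket is alternating and satisfies the Jacobi identity. -/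
open scoped TensorProduct

private lemma add3aux {M : Type*} [AddCommGroup M] {a1 a2 b1 b2 c1 c2 : M}
    (h1 : a1 + b1 + c1 = 0) (h2 : a2 + b2 + c2 = 0) :
    a1 + a2 + (b1 + b2) + (c1 + c2) = 0 := by
  rw [show a1 + a2 + (b1 + b2) + (c1 + c2) = (a1 + b1 + c1) + (a2 + b2 + c2) by abel, h1, h2,
    add_zero]

/-- For a Zinbiel algebra `Z` and a left Leibniz algebra `D` over a field
`k` of characteristic zero, the bracket `[z⊗a, w⊗b] = zw ⊗ [a,b] − wz ⊗ [b,a]` makes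
`Z ⊗ D` a Lie algebra: the bracket is alternating and satisfies the Jacobi identity. -/
theorem stmt13 {k : Type*} [Field k] [CharZero k]
    {Z : Type*} [NonUnitalNonAssocRing Z] [Module k Z] [SMulCommClass k Z Z] [IsScalarTower k Z Z]
    (hZ : ∀ x y z : Z, (x * y + y * x) * z = x * (y * z))
    {D : Type*} [AddCommGroup D] [Module k D]
    (br : D →ₗ[k] D →ₗ[k] D)
    (hbr : ∀ x y z : D, br x (br y z) = br (br x y) z + br y (br x z))
    (b : Z ⊗[k] D →ₗ[k] Z ⊗[k] D →ₗ[k] Z ⊗[k] D)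
    (hb : ∀ (z w : Z) (a c : D),
      b (z ⊗ₜ[k] a) (w ⊗ₜ[k] c) = (z * w) ⊗ₜ[k] br a c - (w * z) ⊗ₜ[k] br c a) :
    (∀ x : Z ⊗[k] D, b x x = 0) ∧
    (∀ x y z : Z ⊗[k] D, b (b x y) z + b (b y z) x + b (b z x) y = 0) := by
  -- Zinbiel facts
  have hleft : ∀ u v w : Z, (v * u) * w = u * (v * w) - (u * v) * w := by
    intro u v w
    have h : (u * v) * w + (v * u) * w = u * (v * w) := by rw [← add_mul, hZ]
    exact eq_sub_of_add_eq' h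
  have hswap : ∀ u v w : Z, u * (v * w) = v * (u * w) := by
    intro u v w
    rw [← hZ u v w, ← hZ v u w, add_comm]
  -- Leibniz fact
  have hL : ∀ u v w : D, br (br u v) w = br u (br v w) - br v (br u w) := by
    intro u v w
    exact eq_sub_of_add_eq (hbr u v w).symm
  -- antisymmetry
  have hanti : ∀ u v : Z ⊗[k] D, b u v + b v u = 0 := by
    have : b + b.flip = 0 := TensorProduct.ext' fun z a => TensorProduct.ext' fun w c => by
      simp only [LinearMap.add_apply, LinearMap.flip_apply, LinearMap.zero_apply, hb]
      abel
    intro u v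
    have h := LinearMap.congr_fun (LinearMap.congr_fun this u) v
    simpa using h
  constructor
  · intro x
    have h := hanti x x
    have h2 : (2 : k) • b x x = 0 := by rw [two_smul]; exact h
    rcases smul_eq_zero.mp h2 with h3 | h3
    · exact absurd h3 two_ne_zero
    · exact h3
  · -- Jacobi on pure tensors
    have key : ∀ (x y z : Z) (a c e : D),
        b (b (x ⊗ₜ[k] a) (y ⊗ₜ[k] c)) (z ⊗ₜ[k] e)
          + b (b (y ⊗ₜ[k] c) (z ⊗ₜ[k] e)) (x ⊗ₜ[k] a)
          + b (b (z ⊗ₜ[k] e) (x ⊗ₜ[k] a)) (y ⊗ₜ[k] c) = 0 := by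
      intro x y z a c e
      simp only [hb, map_sub, LinearMap.sub_apply]
      simp only [hL]
      rw [hleft x y z, hleft y z x, hleft z x y, hswap z x y, hswap z y x, hswap y x z]
      simp only [TensorProduct.tmul_sub, TensorProduct.sub_tmul]
      abel
    intro x y z
    induction x using TensorProduct.induction_on with
    | zero => simp
    | add u v hu hv => simp only [map_add, LinearMap.add_apply]; exact add3aux hu hv
    | tmul xz xa =>
      induction y using TensorProduct.induction_on with
      | zero => simp
      | add u v hu hv => simp only [map_add, LinearMap.add_apply]; exact add3aux hu hv
      | tmul yz ya =>
        induction z using TensorProduct.induction_on with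
        | zero => simp
        | add u v hu hv => simp only [map_add, LinearMap.add_apply]; exact add3aux hu hv
        | tmul zz za => exact key xz yz zz xa ya za
end
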